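/- Let R be a Noetherian integral domain. If there exists a prime element x in R such that the localization R_x (localizing at powers of x) is a unique factorization domain, then R is a unique factorization domain. -/

import Mathlib

/-- A derivation is *locally nilpotent* if every element is killed by some iterate. -/
def IsLND {k B : Type*} [CommRing k] [CommRing B] [Algebra k B]
    (D : Derivation k B B) : Prop :=
  ∀ b : B, ∃ n : ℕ, (D.toLinearMap ^ n) b = 0

/-- A derivation *has a slice* if `1` is in its image. -/
def HasSlice {k B : Type*} [CommRing k] [CommRing B] [Algebra k B]
    (D : Derivation k B B) : Prop :=
  ∃ s : B, D s = 1

/-- The kernel of a derivation, as a subalgebra. -/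
def lndKer {k B : Type*} [CommRing k] [CommRing B] [Algebra k B]
    (D : Derivation k B B) : Subalgebra k B where
  carrier := {b | D b = 0}
  mul_mem' := by
    intro a b ha hb
    simp only [Set.mem_setOf_eq] at *
    simp [D.leibniz, ha, hb]
  add_mem' := by
    intro a b ha hb
    simp only [Set.mem_setOf_eq] at *
    simp [ha, hb]
  algebraMap_mem' := fun r => D.map_algebraMap r

/-- The Makar-Limanov invariant: intersection of the kernels of all locally
nilpotent derivations. -/
def ML (k : Type*) {B : Type*} [CommRing k] [CommRing B] [Algebra k B] : Subalgebra k B :=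
  ⨅ D ∈ {D : Derivation k B B | IsLND D}, lndKer D

/-- The Makar-Limanov–Freudenburg invariant: intersection of the kernels of all locally
nilpotent derivations admitting a slice (equal to `⊤ = B` if none exist). -/
def MLstar (k : Type*) {B : Type*} [CommRing k] [CommRing B] [Algebra k B] : Subalgebra k B :=
  ⨅ D ∈ {D : Derivation k B B | IsLND D ∧ HasSlice D}, lndKer D

/-- A `k`-algebra is *rigid* if it admits no nonzero locally nilpotent derivation. -/
def IsRigid (k B : Type*) [CommRing k] [CommRing B] [Algebra k B] : Prop :=
  ∀ D : Derivation k B B, IsLND D → D = 0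

/-- The extension `A ⊆ B` has transcendence degree `n`. -/
def TrdegEq (A B : Type*) [CommRing A] [CommRing B] [Algebra A B] (n : ℕ) : Prop :=
  (∃ x : Fin n → B, AlgebraicIndependent A x) ∧
    ∀ x : Fin (n + 1) → B, ¬ AlgebraicIndependent A x

/-- A subring `A` of a domain `B` is *inert* if `f * g ∈ A` for nonzero `f, g`
implies `f ∈ A` and `g ∈ A`. -/
def IsInert {B : Type*} [CommRing B] (A : Subring B) : Prop :=
  ∀ f g : B, f ≠ 0 → g ≠ 0 → f * g ∈ A → f ∈ A ∧ g ∈ A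

section NagataAux

variable {R : Type*} [CommRing R] [IsDomain R] {x : R}

/-- If `x ∤ q` and `q * c = x ^ n * a`, then `q ∣ a`. -/
lemma nagata_dvd_of_mul_eq (hx : Prime x) {q : R} (hxq : ¬ x ∣ q) :
    ∀ (n : ℕ) (a c : R), q * c = x ^ n * a → q ∣ a := by
  intro n
  induction n with
  | zero => intro a c hc; exact ⟨c, by simpa using hc.symm⟩
  | succ n ih =>
      intro a c hc
      have hxqc : x ∣ q * c := ⟨x ^ n * a, by rw [hc, pow_succ]; ring⟩
      rcases hx.dvd_mul.mp hxqc with h' | h'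
      · exact absurd h' hxq
      obtain ⟨c', rfl⟩ := h'
      exact ih a c' (mul_left_cancel₀ hx.ne_zero (by linear_combination hc))

/-- Splitting powers of a prime out of a product. -/
lemma nagata_split (hx : Prime x) :
    ∀ (n : ℕ) (a b q : R), a * b = x ^ n * q →
      ∃ (i j : ℕ) (a' b' : R), i + j = n ∧ a = x ^ i * a' ∧ b = x ^ j * b' ∧ a' * b' = q := by
  intro n
  induction n with
  | zero =>
      intro a b q hq
      exact ⟨0, 0, a, b, rfl, by simp, by simp, by simpa using hq⟩
  | succ n ih =>
      intro a b q hq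
      have hxab : x ∣ a * b := ⟨x ^ n * q, by rw [hq]; ring⟩
      rcases hx.dvd_mul.mp hxab with ⟨a₀, rfl⟩ | ⟨b₀, rfl⟩
      · obtain ⟨i, j, a', b', hij, ha, hb, hab⟩ := ih a₀ b q
          (mul_left_cancel₀ hx.ne_zero (by linear_combination hq))
        exact ⟨i + 1, j, a', b', by omega, by rw [ha]; ring, hb, hab⟩
      · obtain ⟨i, j, a', b', hij, ha, hb, hab⟩ := ih a b₀ q
          (mul_left_cancel₀ hx.ne_zero (by linear_combination hq))
        exact ⟨i, j + 1, a', b', by omega, ha, by rw [hb]; ring, hab⟩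

end NagataAux

/-- Nagata's criterion: a Noetherian domain with a prime element `x` such that the
localization away from `x` is a UFD is itself a UFD. -/
theorem stmt_0 {R : Type*} [CommRing R] [IsDomain R] [IsNoetherianRing R]
    {x : R} (hx : Prime x)
    (h : haveI : IsDomain (Localization.Away x) :=
          IsLocalization.isDomain_of_le_nonZeroDivisors (Localization.Away x)
            (powers_le_nonZeroDivisors_of_noZeroDivisors hx.ne_zero)
        UniqueFactorizationMonoid (Localization.Away x)) :
    UniqueFactorizationMonoid R := by
  haveI : IsDomain (Localization.Away x) :=
    IsLocalization.isDomain_of_le_nonZeroDivisors (Localization.Away x)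
      (powers_le_nonZeroDivisors_of_noZeroDivisors hx.ne_zero)
  haveI hS : UniqueFactorizationMonoid (Localization.Away x) := h
  set S := Localization.Away x
  set φ : R →+* S := algebraMap R S with hφ
  have hinj : Function.Injective φ :=
    IsLocalization.injective S (powers_le_nonZeroDivisors_of_noZeroDivisors hx.ne_zero)
  have hxu : IsUnit (φ x) := IsLocalization.Away.algebraMap_isUnit x
  -- surjectivity up to powers of x
  have hsurj : ∀ s : S, ∃ (a : R) (n : ℕ), s * φ x ^ n = φ a := by
    intro s
    obtain ⟨⟨a, t⟩, ht⟩ := IsLocalization.surj (Submonoid.powers x) s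
    obtain ⟨n, hn⟩ := t.2
    have hn' : x ^ n = (t : R) := hn
    exact ⟨a, n, by rw [← map_pow, hn']; exact ht⟩
  -- key: q irreducible, x ∤ q implies φ q prime in S, hence q prime in R
  have key : ∀ q : R, Irreducible q → ¬ x ∣ q → Prime q := by
    intro q hq hxq
    -- φ q is not a unit
    have hnu : ¬ IsUnit (φ q) := by
      intro hu
      obtain ⟨s, hs⟩ := hu.exists_right_inv
      obtain ⟨c, n, hc⟩ := hsurj s
      have : φ (q * c) = φ (x ^ n * 1) := by
        simp only [map_mul, map_pow, map_one, mul_one]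
        calc φ q * φ c = φ q * (s * φ x ^ n) := by rw [hc]
          _ = (φ q * s) * φ x ^ n := by ring
          _ = φ x ^ n := by rw [hs, one_mul]
      exact hq.not_isUnit (isUnit_of_dvd_one
        (nagata_dvd_of_mul_eq hx hxq n 1 c (hinj this)))
    -- φ q is irreducible
    have hirr : Irreducible (φ q) := by
      refine ⟨hnu, fun f g hfg => ?_⟩
      obtain ⟨a, m, ha⟩ := hsurj f
      obtain ⟨b, k, hb⟩ := hsurj g
      have hab : φ (x ^ (m + k) * q) = φ (a * b) := by
        simp only [map_mul, map_pow]
        calc φ x ^ (m + k) * φ q = (f * φ x ^ m) * (g * φ x ^ k) := by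
              rw [hfg, pow_add]; ring
          _ = φ a * φ b := by rw [ha, hb]
      have hab' : a * b = x ^ (m + k) * q := (hinj hab).symm
      obtain ⟨i, j, a', b', hij, ha', hb', hq'⟩ := nagata_split hx (m + k) a b q hab'
      have hfa : IsUnit f ↔ IsUnit (φ a) := by
        constructor
        · intro hf; rw [← ha]; exact hf.mul (hxu.pow m)
        · intro hfa
          have : IsUnit (f * φ x ^ m) := ha ▸ hfa
          exact isUnit_of_mul_isUnit_left this
      have hgb : IsUnit g ↔ IsUnit (φ b) := by
        constructor
        · intro hg; rw [← hb]; exact hg.mul (hxu.pow k)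
        · intro hgb
          have : IsUnit (g * φ x ^ k) := hb ▸ hgb
          exact isUnit_of_mul_isUnit_left this
      rcases hq.isUnit_or_isUnit hq'.symm with hu | hu
      · left
        rw [hfa, ha', map_mul, map_pow]
        exact (hxu.pow i).mul (hu.map φ)
      · right
        rw [hgb, hb', map_mul, map_pow]
        exact (hxu.pow j).mul (hu.map φ)
    have hprime : Prime (φ q) := hS.irreducible_iff_prime.mp hirr
    -- pull back primality
    refine ⟨hq.ne_zero, hq.not_isUnit, fun a b hab => ?_⟩
    have : φ q ∣ φ a * φ b := by rw [← map_mul]; exact map_dvd φ hab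
    rcases hprime.2.2 _ _ this with hd | hd
    · left
      obtain ⟨s, hs⟩ := hd
      obtain ⟨c, n, hc⟩ := hsurj s
      have : φ (a * x ^ n) = φ (q * c) := by
        simp only [map_mul, map_pow]
        calc φ a * φ x ^ n = φ q * s * φ x ^ n := by rw [← hs]
          _ = φ q * (s * φ x ^ n) := by ring
          _ = φ q * φ c := by rw [hc]
      exact nagata_dvd_of_mul_eq hx hxq n a c (by rw [← hinj this]; ring)
    · right
      obtain ⟨s, hs⟩ := hd
      obtain ⟨c, n, hc⟩ := hsurj s
      have : φ (b * x ^ n) = φ (q * c) := by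
        simp only [map_mul, map_pow]
        calc φ b * φ x ^ n = φ q * s * φ x ^ n := by rw [← hs]
          _ = φ q * (s * φ x ^ n) := by ring
          _ = φ q * φ c := by rw [hc]
      exact nagata_dvd_of_mul_eq hx hxq n b c (by rw [← hinj this]; ring)
  haveI hwf : WfDvdMonoid R := inferInstance
  refine { hwf with irreducible_iff_prime := fun {q} => ⟨fun hq => ?_, Prime.irreducible⟩ }
  by_cases hxq : x ∣ q
  · obtain ⟨c, rfl⟩ := hxq
    rcases hq.isUnit_or_isUnit rfl with hu | hu
    · exact absurd hu hx.not_isUnit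
    · exact (Associated.prime ⟨hu.unit, rfl⟩ hx)
  · exact key q hq hxq
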